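/- For the singular linear space case t = 2: with P a fixed subspace of type (l₁,l₂) in F_q^{n₁+n₂}, the number of subspaces of type (k₁,k₂) containing P equals q^{(k₁−k₂−l₁+l₂)(n₂−k₂)} · [n₂−l₂ choose k₂−l₂]_q · [n₁−l₁+l₂ choose k₁−k₂−l₁+l₂]_q, provided 0 ≤ l₁−l₂ ≤ k₁−k₂ ≤ n₁ and 0 ≤ l₂ ≤ k₂ ≤ n₂. -/

import Mathlib

/-- Gaussian binomial coefficient, via the q-Pascal recursion. -/
def gaussBinom (q : ℕ) : ℕ → ℕ → ℕ
  | _, 0 => 1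
  | 0, _ + 1 => 0
  | m + 1, i + 1 => gaussBinom q m i + q ^ (i + 1) * gaussBinom q m (i + 1)


/-- The subspace of `F^N` spanned by the standard basis vectors `e_j` with `c ≤ j`. -/
def lastSpan (F : Type) [Field F] (N c : ℕ) : Submodule F (Fin N → F) :=
  Submodule.span F {v | ∃ j : Fin N, c ≤ (j : ℕ) ∧ v = Pi.single j 1}

open Module

section Helpers
variable {F : Type} [Field F] [Fintype F]

lemma card_partition {α : Type} [Finite α] (p r : α → Prop) :
    Nat.card {x : α // p x} =
      Nat.card {x : α // p x ∧ r x} + Nat.card {x : α // p x ∧ ¬ r x} := by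
  classical
  rw [← Nat.card_sum]
  apply Nat.card_congr
  exact (Equiv.sumCompl (fun y : {x : α // p x} => r y.1)).symm.trans
    (Equiv.sumCongr (Equiv.subtypeSubtypeEquivSubtypeInter p r)
      (Equiv.subtypeSubtypeEquivSubtypeInter p (fun x => ¬ r x)))

lemma card_fiber_const {S T : Type} [Finite S] [Finite T] (f : S → T) (c : ℕ)
    (h : ∀ t, Nat.card {s : S // f s = t} = c) : Nat.card S = Nat.card T * c := by
  classical
  cases nonempty_fintype S
  cases nonempty_fintype T
  rw [Nat.card_eq_fintype_card, Nat.card_eq_fintype_card]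
  rw [← Fintype.card_congr (Equiv.sigmaFiberEquiv f), Fintype.card_sigma]
  have h' : ∀ t, Fintype.card {s : S // f s = t} = c := fun t => by
    rw [← Nat.card_eq_fintype_card]; exact h t
  simp [h', Finset.sum_const, Finset.card_univ, mul_comm]

variable {V : Type} [AddCommGroup V] [Module F V] [FiniteDimensional F V]

lemma finrank_map_mkQ (P W : Submodule F V) :
    finrank F (W.map P.mkQ) + finrank F ↥(W ⊓ P) = finrank F W := by
  have h := LinearMap.finrank_range_add_finrank_ker (P.mkQ ∘ₗ W.subtype)
  rw [LinearMap.range_comp, Submodule.range_subtype, LinearMap.ker_comp,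
    Submodule.ker_mkQ] at h
  have h2 : finrank F ↥(Submodule.comap W.subtype P) = finrank F ↥(W ⊓ P) := by
    rw [← Submodule.map_comap_subtype W P, Submodule.finrank_map_subtype_eq]
  omega

/-- The key lifting count: subspaces `Q` with prescribed intersection with `E` and
prescribed image in `V ⧸ E` are in bijection with a space of linear maps. -/
lemma card_lift (E A : Submodule F V) (hAE : A ≤ E) (B : Submodule F (V ⧸ E)) :
    Nat.card {Q : Submodule F V // Q ⊓ E = A ∧ Q.map E.mkQ = B} =
      Fintype.card F ^ (finrank F B * (finrank F E - finrank F A)) := by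
  classical
  obtain ⟨s, hs⟩ := E.mkQ.exists_rightInverse_of_surjective (by rw [Submodule.range_mkQ])
  have hsapp : ∀ x : V ⧸ E, E.mkQ (s x) = x := fun x => LinearMap.ext_iff.mp hs x
  set A' : Submodule F ↥E := A.comap E.subtype with hA'def
  have hmapA' : A'.map E.subtype = A := by
    rw [hA'def, Submodule.map_comap_subtype]
    exact inf_eq_right.mpr hAE
  obtain ⟨u, hu⟩ := A'.mkQ.exists_rightInverse_of_surjective (by rw [Submodule.range_mkQ])
  have huapp : ∀ x : ↥E ⧸ A', A'.mkQ (u x) = x := fun x => LinearMap.ext_iff.mp hu x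
  set θ : (↥B →ₗ[F] ↥E ⧸ A') → (↥B →ₗ[F] V) :=
    fun f => (s ∘ₗ B.subtype) + (E.subtype ∘ₗ u ∘ₗ f) with hθdef
  have hθ1 : ∀ f b, E.mkQ (θ f b) = (b : V ⧸ E) := by
    intro f b
    simp only [hθdef, LinearMap.add_apply, LinearMap.comp_apply, map_add,
      Submodule.subtype_apply, Submodule.coe_subtype]
    rw [hsapp]
    have : E.mkQ ((u (f b) : ↥E) : V) = 0 := by
      rw [Submodule.mkQ_apply, Submodule.Quotient.mk_eq_zero]
      exact (u (f b)).2
    rw [this, add_zero]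
  set Φ : (↥B →ₗ[F] ↥E ⧸ A') → Submodule F V := fun f => A ⊔ LinearMap.range (θ f) with hΦdef
  -- image of Φ f in the quotient is B
  have hΦtop : ∀ f, (Φ f).map E.mkQ = B := by
    intro f
    rw [hΦdef]
    simp only
    rw [Submodule.map_sup]
    have h1 : A.map E.mkQ = ⊥ := by
      rw [← LinearMap.le_ker_iff_map, Submodule.ker_mkQ]; exact hAE
    have h2 : (LinearMap.range (θ f)).map E.mkQ = B := by
      rw [← LinearMap.range_comp]
      have he : E.mkQ ∘ₗ θ f = B.subtype := by
        apply LinearMap.ext; intro b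
        simp only [LinearMap.comp_apply, Submodule.subtype_apply]
        exact hθ1 f b
      rw [he, Submodule.range_subtype]
    rw [h1, h2, bot_sup_eq]
  have hΦinf : ∀ f, Φ f ⊓ E = A := by
    intro f
    apply le_antisymm
    · intro x hx
      obtain ⟨hx1, hx2⟩ := Submodule.mem_inf.mp hx
      rw [hΦdef] at hx1; simp only at hx1
      obtain ⟨a, ha, y, hy, hxy⟩ := Submodule.mem_sup.mp hx1
      obtain ⟨b, rfl⟩ := hy
      have h0 : E.mkQ x = 0 := by
        rw [Submodule.mkQ_apply, Submodule.Quotient.mk_eq_zero]; exact hx2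
      rw [← hxy, map_add, hθ1] at h0
      have ha0 : E.mkQ a = 0 := by
        rw [Submodule.mkQ_apply, Submodule.Quotient.mk_eq_zero]; exact hAE ha
      rw [ha0, zero_add] at h0
      have hb0 : b = 0 := by
        apply Subtype.ext; exact h0
      rw [hb0, map_zero, add_zero] at hxy
      rw [← hxy]; exact ha
    · exact le_inf le_sup_left hAE
  have hΦinj : Function.Injective Φ := by
    intro f g hfg
    apply LinearMap.ext; intro b
    have hmem : θ f b ∈ Φ g := by
      rw [← hfg, hΦdef]; simp only
      exact Submodule.mem_sup_right (LinearMap.mem_range_self _ b)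
    rw [hΦdef] at hmem; simp only at hmem
    obtain ⟨a, ha, y, hy, hxy⟩ := Submodule.mem_sup.mp hmem
    obtain ⟨b', rfl⟩ := hy
    -- apply mkQ: b = b'
    have h0 : (b : V ⧸ E) = (b' : V ⧸ E) := by
      have := congrArg E.mkQ hxy
      rw [map_add, hθ1, hθ1] at this
      have ha0 : E.mkQ a = 0 := by
        rw [Submodule.mkQ_apply, Submodule.Quotient.mk_eq_zero]; exact hAE ha
      rw [ha0, zero_add] at this
      exact this.symm
    have hb' : b' = b := Subtype.ext h0.symm
    rw [hb'] at hxy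
    -- now the difference lies in A
    have hdiff : ((u (f b) - u (g b) : ↥E) : V) = θ f b - θ g b := by
      simp only [hθdef, LinearMap.add_apply, LinearMap.comp_apply,
        Submodule.subtype_apply, AddSubgroupClass.coe_sub]
      abel
    have hdA : ((u (f b) - u (g b) : ↥E) : V) ∈ A := by
      rw [hdiff]
      have : θ f b - θ g b = a := by rw [← hxy]; abel
      rw [this]; exact ha
    have hdA' : (u (f b) - u (g b) : ↥E) ∈ A' := Submodule.mem_comap.mpr hdA
    have : A'.mkQ (u (f b) - u (g b)) = 0 := by
      rw [Submodule.mkQ_apply, Submodule.Quotient.mk_eq_zero]; exact hdA'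
    rw [map_sub, huapp, huapp, sub_eq_zero] at this
    exact this
  have hΦsurj : ∀ Q : Submodule F V, Q ⊓ E = A → Q.map E.mkQ = B → ∃ f, Φ f = Q := by
    intro Q hQE hQB
    have hr : ∀ b : ↥B, ∃ r, r ∈ Q ∧ E.mkQ r = (b : V ⧸ E) := by
      intro b
      have hb : (b : V ⧸ E) ∈ Submodule.map E.mkQ Q := by rw [hQB]; exact b.2
      obtain ⟨r, hrQ, hre⟩ := Submodule.mem_map.mp hb
      exact ⟨r, hrQ, hre⟩
    choose r hrQ hrE using hr
    have hEmem : ∀ b : ↥B, r b - s (b : V ⧸ E) ∈ E := by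
      intro b
      have : E.mkQ (r b - s (b : V ⧸ E)) = 0 := by
        rw [map_sub, hrE, hsapp, sub_self]
      rwa [Submodule.mkQ_apply, Submodule.Quotient.mk_eq_zero] at this
    have key : ∀ e : ↥E, (e : V) ∈ Q → A'.mkQ e = 0 := by
      intro e he
      rw [Submodule.mkQ_apply, Submodule.Quotient.mk_eq_zero]
      refine Submodule.mem_comap.mpr ?_
      rw [← hQE]
      exact Submodule.mem_inf.mpr ⟨he, e.2⟩
    set e : ↥B → ↥E := fun b => ⟨r b - s (b : V ⧸ E), hEmem b⟩ with hedef
    have hadd : ∀ b₁ b₂ : ↥B, A'.mkQ (e (b₁ + b₂)) = A'.mkQ (e b₁) + A'.mkQ (e b₂) := by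
      intro b₁ b₂
      rw [← map_add, ← sub_eq_zero, ← map_sub]
      apply key
      have hcoe : ((e (b₁ + b₂) - (e b₁ + e b₂) : ↥E) : V) = r (b₁ + b₂) - r b₁ - r b₂ := by
        simp only [hedef, AddSubgroupClass.coe_sub, Submodule.coe_add, Submodule.coe_mk]
        rw [map_add]
        abel
      rw [hcoe]
      exact sub_mem (sub_mem (hrQ _) (hrQ _)) (hrQ _)
    have hsmul : ∀ (c : F) (b : ↥B), A'.mkQ (e (c • b)) = c • A'.mkQ (e b) := by
      intro c b
      rw [← map_smul, ← sub_eq_zero, ← map_sub]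
      apply key
      have hcoe : ((e (c • b) - c • e b : ↥E) : V) = r (c • b) - c • r b := by
        simp only [hedef, AddSubgroupClass.coe_sub, SetLike.val_smul, Submodule.coe_mk]
        rw [map_smul, smul_sub]
        abel
      rw [hcoe]
      exact sub_mem (hrQ _) (Submodule.smul_mem _ _ (hrQ _))
    set f : ↥B →ₗ[F] ↥E ⧸ A' :=
      { toFun := fun b => A'.mkQ (e b)
        map_add' := hadd
        map_smul' := fun c b => by simpa using hsmul c b } with hfdef
    refine ⟨f, ?_⟩
    have hθQ : ∀ b : ↥B, θ f b ∈ Q := by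
      intro b
      have h0 : A'.mkQ (u (f b) - e b) = 0 := by
        rw [map_sub, huapp, hfdef]
        simp only [LinearMap.coe_mk, AddHom.coe_mk]
        rw [sub_self]
      rw [Submodule.mkQ_apply, Submodule.Quotient.mk_eq_zero] at h0
      have hA0 : ((u (f b) - e b : ↥E) : V) ∈ A := by
        rw [← hmapA']
        exact Submodule.mem_map_of_mem h0
      have hAQ : ((u (f b) - e b : ↥E) : V) ∈ Q := by
        rw [← hQE] at hA0
        exact hA0.1
      have hθeq : θ f b = r b + ((u (f b) - e b : ↥E) : V) := by
        simp only [hθdef, LinearMap.add_apply, LinearMap.comp_apply,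
          Submodule.subtype_apply, AddSubgroupClass.coe_sub, hedef, Submodule.coe_mk]
        abel
      rw [hθeq]
      exact add_mem (hrQ b) hAQ
    apply le_antisymm
    · rw [hΦdef]; simp only
      apply sup_le
      · rw [← hQE]; exact inf_le_left
      · rintro x ⟨b, rfl⟩
        exact hθQ b
    · intro x hx
      have hbx : E.mkQ x ∈ B := by rw [← hQB]; exact Submodule.mem_map_of_mem hx
      set b : ↥B := ⟨E.mkQ x, hbx⟩ with hbdef
      have hxE : x - θ f b ∈ E := by
        have : E.mkQ (x - θ f b) = 0 := by
          rw [map_sub, hθ1]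
          simp [hbdef]
        rwa [Submodule.mkQ_apply, Submodule.Quotient.mk_eq_zero] at this
      have hxQ : x - θ f b ∈ Q := sub_mem hx (hθQ b)
      have hxA : x - θ f b ∈ A := by
        rw [← hQE]; exact Submodule.mem_inf.mpr ⟨hxQ, hxE⟩
      have : x = (x - θ f b) + θ f b := by abel
      rw [this, hΦdef]; simp only
      exact add_mem (Submodule.mem_sup_left hxA)
        (Submodule.mem_sup_right (LinearMap.mem_range_self _ b))
  -- now conclude
  have hequiv : (↥B →ₗ[F] ↥E ⧸ A') ≃ {Q : Submodule F V // Q ⊓ E = A ∧ Q.map E.mkQ = B} := by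
    refine Equiv.ofBijective (fun f => ⟨Φ f, hΦinf f, hΦtop f⟩) ⟨?_, ?_⟩
    · intro f g h
      exact hΦinj (congrArg Subtype.val h)
    · rintro ⟨Q, h1, h2⟩
      obtain ⟨f, hf⟩ := hΦsurj Q h1 h2
      exact ⟨f, Subtype.ext hf⟩
  rw [← Nat.card_congr hequiv]
  have hfin : Finite (↥B →ₗ[F] ↥E ⧸ A') := Module.finite_of_finite F
  cases nonempty_fintype (↥B →ₗ[F] ↥E ⧸ A')
  rw [Nat.card_eq_fintype_card, card_eq_pow_finrank (K := F), Module.finrank_linearMap]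
  have hq := Submodule.finrank_quotient_add_finrank A'
  have hA'rank : finrank F ↥A' = finrank F ↥A := by
    rw [← hmapA', Submodule.finrank_map_subtype_eq]
  have hfr : finrank F (↥E ⧸ A') = finrank F ↥E - finrank F ↥A := by omega
  rw [hfr]

end Helpers


section Grass
variable {F : Type} [Field F] [Fintype F]

lemma card_rank_zero (V : Type) [AddCommGroup V] [Module F V] [FiniteDimensional F V] :
    Nat.card {Q : Submodule F V // finrank F ↥Q = 0} = 1 := by
  rw [Nat.card_eq_one_iff_unique]
  constructor
  · constructor
    rintro ⟨Q1, h1⟩ ⟨Q2, h2⟩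
    apply Subtype.ext
    have e1 : Q1 = ⊥ := Submodule.finrank_eq_zero.mp h1
    have e2 : Q2 = ⊥ := Submodule.finrank_eq_zero.mp h2
    show Q1 = Q2
    rw [e1, e2]
  · exact ⟨⟨⊥, finrank_bot F V⟩⟩

lemma card_rank_gt (V : Type) [AddCommGroup V] [Module F V] [FiniteDimensional F V]
    {n k : ℕ} (hV : finrank F V = n) (h : n < k) :
    Nat.card {Q : Submodule F V // finrank F ↥Q = k} = 0 := by
  have : IsEmpty {Q : Submodule F V // finrank F ↥Q = k} := by
    constructor
    rintro ⟨Q, hQ⟩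
    have := Submodule.finrank_le Q
    omega
  exact Nat.card_of_isEmpty

lemma card_grass : ∀ (n : ℕ) (V : Type) [AddCommGroup V] [Module F V] [FiniteDimensional F V],
    finrank F V = n → ∀ k : ℕ,
    Nat.card {Q : Submodule F V // finrank F ↥Q = k} = gaussBinom (Fintype.card F) n k := by
  intro n
  induction n with
  | zero =>
    intro V _ _ _ hV k
    match k with
    | 0 => rw [card_rank_zero V]; rfl
    | k + 1 => rw [card_rank_gt V hV (by omega)]; rfl
  | succ n ih =>
    intro V _ _ _ hV k
    match k with
    | 0 => rw [card_rank_zero V]; rw [show gaussBinom (Fintype.card F) (n+1) 0 = 1 from rfl]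
    | k + 1 =>
      have hfinV : Finite V := Module.finite_of_finite F
      have hnt : Nontrivial V := Module.nontrivial_of_finrank_pos (R := F) (by omega)
      obtain ⟨v, hv⟩ := exists_ne (0 : V)
      set L : Submodule F V := Submodule.span F {v} with hLdef
      have hL : finrank F ↥L = 1 := finrank_span_singleton hv
      have hVL : finrank F (V ⧸ L) = n := by
        have := Submodule.finrank_quotient_add_finrank L
        omega
      have hQL : ∀ Q : Submodule F V, ¬ L ≤ Q → Q ⊓ L = ⊥ := by
        intro Q hnle
        by_contra hne
        have hpos : 0 < finrank F ↥(Q ⊓ L) := by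
          rcases Nat.eq_zero_or_pos (finrank F ↥(Q ⊓ L)) with h0 | h0
          · exact absurd (Submodule.finrank_eq_zero.mp h0) hne
          · exact h0
        have hle1 : finrank F ↥(Q ⊓ L) ≤ 1 := by
          have := Submodule.finrank_mono (inf_le_right : Q ⊓ L ≤ L)
          omega
        have heq : Q ⊓ L = L := Submodule.eq_of_le_of_finrank_eq inf_le_right (by omega)
        exact hnle (heq ▸ inf_le_left)
      rw [card_partition (fun Q : Submodule F V => finrank F ↥Q = k + 1) (fun Q => L ≤ Q)]
      have hS1 : Nat.card {Q : Submodule F V // finrank F ↥Q = k + 1 ∧ L ≤ Q} =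
          gaussBinom (Fintype.card F) n k := by
        rw [← ih (V ⧸ L) hVL k]
        apply Nat.card_congr
        refine ⟨fun Q => ⟨Submodule.map L.mkQ Q.1, ?_⟩,
          fun R => ⟨Submodule.comap L.mkQ R.1, ?_, ?_⟩, ?_, ?_⟩
        · -- finrank of image is k
          obtain ⟨Q, hQ, hLQ⟩ := Q
          show finrank F ↥(Submodule.map L.mkQ Q) = k
          have h := finrank_map_mkQ L Q
          rw [inf_eq_right.mpr hLQ, hL, hQ] at h
          simpa using by omega
        · -- finrank of preimage is k+1
          obtain ⟨R, hR⟩ := R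
          show finrank F ↥(Submodule.comap L.mkQ R) = k + 1
          have hmc : Submodule.map L.mkQ (Submodule.comap L.mkQ R) = R := by
            rw [Submodule.map_comap_eq, Submodule.range_mkQ, top_inf_eq]
          have hLc : L ≤ Submodule.comap L.mkQ R := by
            intro x hx
            have : L.mkQ x = 0 := by
              rw [Submodule.mkQ_apply, Submodule.Quotient.mk_eq_zero]; exact hx
            simp only [Submodule.mem_comap, this]
            exact zero_mem R
          have h := finrank_map_mkQ L (Submodule.comap L.mkQ R)
          rw [hmc, inf_eq_right.mpr hLc, hL, hR] at h
          omega
        · -- L ≤ preimage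
          obtain ⟨R, hR⟩ := R
          show L ≤ Submodule.comap L.mkQ R
          intro x hx
          have : L.mkQ x = 0 := by
            rw [Submodule.mkQ_apply, Submodule.Quotient.mk_eq_zero]; exact hx
          simp only [Submodule.mem_comap, this]
          exact zero_mem R
        · -- left inverse
          rintro ⟨Q, hQ, hLQ⟩
          apply Subtype.ext
          simp only
          rw [Submodule.comap_map_mkQ, sup_eq_right.mpr hLQ]
        · -- right inverse
          rintro ⟨R, hR⟩
          apply Subtype.ext
          simp only
          rw [Submodule.map_comap_eq, Submodule.range_mkQ, top_inf_eq]
      have hS2 : Nat.card {Q : Submodule F V // finrank F ↥Q = k + 1 ∧ ¬ L ≤ Q} =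
          gaussBinom (Fintype.card F) n (k + 1) * Fintype.card F ^ (k + 1) := by
        rw [← ih (V ⧸ L) hVL (k + 1)]
        have hmapdim : ∀ Q : {Q : Submodule F V // finrank F ↥Q = k + 1 ∧ ¬ L ≤ Q},
            finrank F ↥(Submodule.map L.mkQ Q.1) = k + 1 := by
          rintro ⟨Q, hQ, hnle⟩
          have h := finrank_map_mkQ L Q
          rw [hQL Q hnle, finrank_bot, hQ] at h
          simpa using h
        have hfinVL : Finite (V ⧸ L) := Finite.of_surjective _ (Submodule.mkQ_surjective L)
        apply card_fiber_const
          (fun Q : {Q : Submodule F V // finrank F ↥Q = k + 1 ∧ ¬ L ≤ Q} =>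
            (⟨Submodule.map L.mkQ Q.1, hmapdim Q⟩ :
              {B : Submodule F (V ⧸ L) // finrank F ↥B = k + 1}))
        rintro ⟨B, hB⟩
        have hcl := card_lift L ⊥ bot_le B
        rw [finrank_bot, hL, hB] at hcl
        simp only [Nat.sub_zero, mul_one] at hcl
        rw [← hcl]
        apply Nat.card_congr
        refine ⟨fun Q => ⟨Q.1.1, hQL Q.1.1 Q.1.2.2, ?_⟩, fun Q => ⟨⟨Q.1, ?_, ?_⟩, ?_⟩, ?_, ?_⟩
        · exact congrArg Subtype.val Q.2
        · -- finrank = k+1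
          obtain ⟨Q, hQb, hQm⟩ := Q
          show finrank F ↥Q = k + 1
          have h := finrank_map_mkQ L Q
          rw [hQb, finrank_bot, hQm, hB] at h
          omega
        · -- ¬ L ≤ Q
          obtain ⟨Q, hQb, hQm⟩ := Q
          show ¬ L ≤ Q
          intro hle
          have : Q ⊓ L = L := inf_eq_right.mpr hle
          rw [hQb] at this
          have : finrank F ↥L = 0 := by rw [← this, finrank_bot]
          omega
        · exact Subtype.ext Q.2.2
        · rintro ⟨⟨Q, h1, h2⟩, h3⟩; rfl
        · rintro ⟨Q, h1, h2⟩; rfl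
      rw [hS1, hS2]
      rw [show gaussBinom (Fintype.card F) (n+1) (k+1)
          = gaussBinom (Fintype.card F) n k
            + Fintype.card F ^ (k+1) * gaussBinom (Fintype.card F) n (k+1) from rfl]
      ring

end Grass

section Master
variable {F : Type} [Field F] [Fintype F]

lemma card_type (V : Type) [AddCommGroup V] [Module F V] [FiniteDimensional F V]
    (E : Submodule F V) (a b k₁ k₂ : ℕ) (hV : finrank F V = a + b) (hE : finrank F ↥E = b)
    (hk : k₂ ≤ k₁) :
    Nat.card {Q : Submodule F V // finrank F ↥Q = k₁ ∧ finrank F ↥(Q ⊓ E) = k₂} =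
      Fintype.card F ^ ((k₁ - k₂) * (b - k₂)) * gaussBinom (Fintype.card F) b k₂ *
        gaussBinom (Fintype.card F) a (k₁ - k₂) := by
  classical
  have hfinV : Finite V := Module.finite_of_finite F
  have hfinQ : Finite (V ⧸ E) := Finite.of_surjective _ (Submodule.mkQ_surjective E)
  have hVE : finrank F (V ⧸ E) = a := by
    have := Submodule.finrank_quotient_add_finrank E
    have := Submodule.finrank_le E
    omega
  have hd1 : ∀ W : Submodule F V, W ≤ E →
      finrank F ↥(W.comap E.subtype) = finrank F ↥W := by
    intro W hW
    rw [← Submodule.finrank_map_subtype_eq E (W.comap E.subtype),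
      Submodule.map_comap_subtype, inf_eq_right.mpr hW]
  set g : {Q : Submodule F V // finrank F ↥Q = k₁ ∧ finrank F ↥(Q ⊓ E) = k₂} →
      ({A : Submodule F ↥E // finrank F ↥A = k₂} ×
        {B : Submodule F (V ⧸ E) // finrank F ↥B = k₁ - k₂}) :=
    fun Q => (⟨(Q.1 ⊓ E).comap E.subtype, by rw [hd1 _ inf_le_right]; exact Q.2.2⟩,
      ⟨Q.1.map E.mkQ, by
        have h := finrank_map_mkQ E Q.1
        rw [Q.2.1, Q.2.2] at h
        omega⟩) with hgdef
  have hfib : ∀ t, Nat.card {Q // g Q = t} = Fintype.card F ^ ((k₁ - k₂) * (b - k₂)) := by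
    rintro ⟨⟨A, hA⟩, ⟨B, hB⟩⟩
    have hcl := card_lift E (A.map E.subtype) (Submodule.map_subtype_le E A) B
    rw [Submodule.finrank_map_subtype_eq, hA, hB, hE] at hcl
    rw [← hcl]
    apply Nat.card_congr
    refine ⟨fun Q => ⟨Q.1.1, ?_, ?_⟩, fun Q => ⟨⟨Q.1, ?_, ?_⟩, ?_⟩, ?_, ?_⟩
    · -- Q ⊓ E = map subtype A
      have h31 : (Q.1.1 ⊓ E).comap E.subtype = A := by
        have := congrArg (fun p => (p.1 : Submodule F ↥E)) Q.2
        simpa [hgdef] using this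
      have h32 : Submodule.map E.subtype (Submodule.comap E.subtype (Q.1.1 ⊓ E)) = Q.1.1 ⊓ E := by
        rw [Submodule.map_comap_subtype]
        exact inf_eq_right.mpr inf_le_right
      rw [← h32, h31]
    · -- map mkQ Q = B
      have := congrArg (fun p => (p.2 : Submodule F (V ⧸ E))) Q.2
      simpa [hgdef] using this
    · -- finrank Q = k₁
      have h := finrank_map_mkQ E Q.1
      rw [Q.2.1, Q.2.2, Submodule.finrank_map_subtype_eq, hA, hB] at h
      omega
    · -- finrank (Q ⊓ E) = k₂
      rw [Q.2.1, Submodule.finrank_map_subtype_eq, hA]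
    · -- g value
      have h1 : (Q.1 ⊓ E).comap E.subtype = A := by
        rw [Q.2.1, Submodule.comap_map_eq_of_injective (Submodule.injective_subtype E)]
      rw [hgdef]
      simp only [Prod.mk.injEq]
      exact ⟨Subtype.ext h1, Subtype.ext Q.2.2⟩
    · rintro ⟨⟨Q, h1, h2⟩, h3⟩; rfl
    · rintro ⟨Q, h1, h2⟩; rfl
  have htot := card_fiber_const g _ hfib
  rw [htot, Nat.card_prod, card_grass b ↥E hE k₂, card_grass a (V ⧸ E) hVE (k₁ - k₂)]
  ring

end Master

section LastSpanRank
variable {F : Type} [Field F] [Fintype F]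

lemma finrank_lastSpan (N c : ℕ) (hc : c ≤ N) :
    Module.finrank F ↥(lastSpan F N c) = N - c := by
  classical
  set v : Fin N → (Fin N → F) := fun j => Pi.single j 1 with hvdef
  set S : Set (Fin N) := {j : Fin N | c ≤ (j : ℕ)} with hSdef
  have hset : {w : Fin N → F | ∃ j : Fin N, c ≤ (j : ℕ) ∧ w = Pi.single j 1} = v '' S := by
    ext w
    constructor
    · rintro ⟨j, hj, rfl⟩; exact ⟨j, hj, rfl⟩
    · rintro ⟨j, hj, rfl⟩; exact ⟨j, hj, rfl⟩
  have hb : v = ⇑(Pi.basisFun F (Fin N)) := by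
    funext j
    rw [Pi.basisFun_apply]
  have hvinj : Function.Injective v := by
    rw [hb]; exact (Pi.basisFun F (Fin N)).injective
  have hli : LinearIndependent F v := by
    rw [hb]; exact (Pi.basisFun F (Fin N)).linearIndependent
  have hli2 : LinearIndependent F (fun x : ↑(v '' S) => (x : Fin N → F)) := by
    have h1 : LinearIndependent F (v ∘ (Subtype.val : S → Fin N)) :=
      hli.comp _ Subtype.val_injective
    have h2 := LinearIndependent.linearIndepOn_id h1
    have h3 : Set.range (v ∘ (Subtype.val : S → Fin N)) = v '' S := by
      rw [Set.range_comp, Subtype.range_coe]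
    rwa [h3] at h2
  have hfin : Fintype ↑(v '' S) := Fintype.ofFinite _
  show Module.finrank F ↥(Submodule.span F
      {w : Fin N → F | ∃ j : Fin N, c ≤ (j : ℕ) ∧ w = Pi.single j 1}) = N - c
  rw [hset, finrank_span_set_eq_card hli2, Set.toFinset_card]
  have hcard1 : Fintype.card ↑(v '' S) = Fintype.card ↑S :=
    (Fintype.card_congr (Equiv.Set.image v S hvinj)).symm
  rw [hcard1]
  have e3 : Fin (N - c) ≃ ↑S := by
    refine ⟨fun i => ⟨⟨c + (i : ℕ), by omega⟩, by simp [hSdef]⟩,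
      fun j => ⟨(j.1 : ℕ) - c, by
        have h1 : c ≤ (j.1 : ℕ) := j.2
        have h2 := j.1.2
        omega⟩,
      ?_, ?_⟩
    · intro i; apply Fin.ext; simp
    · rintro ⟨j, hj⟩
      simp [hSdef] at hj
      apply Subtype.ext
      apply Fin.ext
      simp
      omega
  rw [← Fintype.card_congr e3, Fintype.card_fin]

end LastSpanRank
section Final
variable {F : Type} [Field F] [Fintype F]

lemma sandwich_inf {V : Type} [AddCommGroup V] [Module F V]
    (P Q E : Submodule F V) (hPQ : P ≤ Q) : Q ⊓ E ⊓ P = P ⊓ E := by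
  apply le_antisymm
  · rintro x ⟨⟨hxQ, hxE⟩, hxP⟩
    exact ⟨hxP, hxE⟩
  · rintro x ⟨hxP, hxE⟩
    exact ⟨⟨hPQ hxP, hxE⟩, hxP⟩

/-- In the singular linear space `F_q^{n₁+n₂}` (the case `t = 2`), the number of
subspaces of type `(k₁,k₂)` containing a fixed subspace `P` of type `(l₁,l₂)`. -/
theorem stmt11 {F : Type} [Field F] [Fintype F] (q n₁ n₂ k₁ k₂ l₁ l₂ : ℕ)
    (hq : Fintype.card F = q)
    (h1 : l₂ ≤ l₁) (h2 : l₁ - l₂ ≤ k₁ - k₂) (h3 : k₂ ≤ k₁) (h4 : k₁ - k₂ ≤ n₁)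
    (h5 : l₂ ≤ k₂) (h6 : k₂ ≤ n₂)
    (P : Submodule F (Fin (n₁ + n₂) → F))
    (hP : Module.finrank F P = l₁ ∧ Module.finrank F ↥(P ⊓ lastSpan F (n₁ + n₂) n₁) = l₂) :
    Nat.card {Q : Submodule F (Fin (n₁ + n₂) → F) //
        (Module.finrank F Q = k₁ ∧
          Module.finrank F ↥(Q ⊓ lastSpan F (n₁ + n₂) n₁) = k₂) ∧ P ≤ Q} =
      q ^ (((k₁ - k₂) - (l₁ - l₂)) * (n₂ - k₂)) * gaussBinom q (n₂ - l₂) (k₂ - l₂) *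
        gaussBinom q (n₁ - (l₁ - l₂)) ((k₁ - k₂) - (l₁ - l₂)) := by
  classical
  obtain ⟨hP1, hP2⟩ := hP
  set E₂ : Submodule F (Fin (n₁ + n₂) → F) := lastSpan F (n₁ + n₂) n₁ with hE₂def
  have hVdim : finrank F (Fin (n₁ + n₂) → F) = n₁ + n₂ := by
    simp [Module.finrank_pi]
  have hE₂dim : finrank F ↥E₂ = n₂ := by
    rw [hE₂def, finrank_lastSpan _ _ (by omega)]
    omega
  -- bounds
  have hl₁k₁ : l₁ ≤ k₁ := by omega
  have hl₁n : l₁ ≤ n₁ + l₂ := by omega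
  -- the quotient space
  set E' : Submodule F ((Fin (n₁ + n₂) → F) ⧸ P) := E₂.map P.mkQ with hE'def
  have hE'dim : finrank F ↥E' = n₂ - l₂ := by
    have h := finrank_map_mkQ P E₂
    rw [← hE'def] at h
    rw [inf_comm] at h
    rw [hP2] at h
    rw [hE₂dim] at h
    omega
  have hWdim : finrank F ((Fin (n₁ + n₂) → F) ⧸ P) = (n₁ - (l₁ - l₂)) + (n₂ - l₂) := by
    have h := Submodule.finrank_quotient_add_finrank P
    rw [hP1, hVdim] at h
    omega
  -- the two dimension transfer facts
  have hA : ∀ Q : Submodule F (Fin (n₁ + n₂) → F), P ≤ Q →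
      finrank F ↥(Q.map P.mkQ) + l₁ = finrank F ↥Q := by
    intro Q hPQ
    have h := finrank_map_mkQ P Q
    rw [inf_eq_right.mpr hPQ, hP1] at h
    exact h
  have hB : ∀ Q : Submodule F (Fin (n₁ + n₂) → F), P ≤ Q →
      (Q ⊓ E₂).map P.mkQ = (Q.map P.mkQ) ⊓ E' := by
    intro Q hPQ
    apply le_antisymm
    · rw [hE'def]
      exact le_inf (Submodule.map_mono inf_le_left) (Submodule.map_mono inf_le_right)
    · rintro x ⟨hx1, hx2⟩
      obtain ⟨e, heE, hex⟩ := Submodule.mem_map.mp hx2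
      have heQ : e ∈ Q := by
        have hmem : e ∈ Submodule.comap P.mkQ (Q.map P.mkQ) := by
          rw [Submodule.mem_comap, hex]
          exact hx1
        rwa [Submodule.comap_map_mkQ, sup_eq_right.mpr hPQ] at hmem
      exact ⟨e, ⟨heQ, heE⟩, hex⟩
  have hC : ∀ Q : Submodule F (Fin (n₁ + n₂) → F), P ≤ Q →
      finrank F ↥((Q.map P.mkQ) ⊓ E') + l₂ = finrank F ↥(Q ⊓ E₂) := by
    intro Q hPQ
    have h := finrank_map_mkQ P (Q ⊓ E₂)
    rw [sandwich_inf P Q E₂ hPQ, hP2, hB Q hPQ] at h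
    exact h
  -- the bijection with the quotient problem
  have hcongr : Nat.card {Q : Submodule F (Fin (n₁ + n₂) → F) //
        (finrank F ↥Q = k₁ ∧ finrank F ↥(Q ⊓ E₂) = k₂) ∧ P ≤ Q} =
      Nat.card {R : Submodule F ((Fin (n₁ + n₂) → F) ⧸ P) //
        finrank F ↥R = k₁ - l₁ ∧ finrank F ↥(R ⊓ E') = k₂ - l₂} := by
    apply Nat.card_congr
    refine ⟨fun Q => ⟨Q.1.map P.mkQ, ?_, ?_⟩, fun R => ⟨R.1.comap P.mkQ, ?_⟩, ?_, ?_⟩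
    · have h := hA Q.1 Q.2.2
      rw [Q.2.1.1] at h
      omega
    · have h := hC Q.1 Q.2.2
      rw [Q.2.1.2] at h
      omega
    · -- conditions for the preimage
      have hPle : P ≤ R.1.comap P.mkQ := by
        intro x hx
        rw [Submodule.mem_comap, Submodule.mkQ_apply,
          (Submodule.Quotient.mk_eq_zero P).mpr hx]
        exact zero_mem _
      have hmc : (R.1.comap P.mkQ).map P.mkQ = R.1 := by
        rw [Submodule.map_comap_eq, Submodule.range_mkQ, top_inf_eq]
      refine ⟨⟨?_, ?_⟩, hPle⟩
      · have h := hA (R.1.comap P.mkQ) hPle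
        rw [hmc, R.2.1] at h
        omega
      · have h := hC (R.1.comap P.mkQ) hPle
        rw [hmc, R.2.2] at h
        omega
    · -- left inverse
      rintro ⟨Q, hQ, hPQ⟩
      apply Subtype.ext
      show (Q.map P.mkQ).comap P.mkQ = Q
      rw [Submodule.comap_map_mkQ, sup_eq_right.mpr hPQ]
    · -- right inverse
      rintro ⟨R, hR⟩
      apply Subtype.ext
      show (R.comap P.mkQ).map P.mkQ = R
      rw [Submodule.map_comap_eq, Submodule.range_mkQ, top_inf_eq]
  rw [hcongr]
  rw [card_type ((Fin (n₁ + n₂) → F) ⧸ P) E' (n₁ - (l₁ - l₂)) (n₂ - l₂) (k₁ - l₁) (k₂ - l₂) hWdim hE'dim (by omega)]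
  rw [hq]
  have e1 : (k₁ - l₁) - (k₂ - l₂) = (k₁ - k₂) - (l₁ - l₂) := by omega
  have e2 : (n₂ - l₂) - (k₂ - l₂) = n₂ - k₂ := by omega
  rw [e1, e2]

end Final
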